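/- Let $\mathcal{P}$ be a 1-category and identify $m$-simplices of $N(\Sigma\mathcal{P})$ with functors $\sigma: [k] \times [l]^{\mathrm{op}} \to \mathcal{P}$ where $k + l = m - 1$ ($k$ is called the type of $\sigma$). Let $\sigma: [k] \times [d-k]^{\mathrm{op}} \to \mathcal{P}$ be a non-degenerate suspect $(d+1)$-simplex of type $k$ and suspect index $r \le k$. Then the face $d_a(\sigma)$ is: a suspect simplex if $0 \le a \le r-2$; of suspect index at most $r-1$ if $a = r-1$; of type $k-1$ and suspect index $r$ if $a = r$; a suspect simplex if $r+1 \le a \le k$; and of type $k$ if $k+1 \le a \le d+1$. -/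
import Mathlib


/-!
STATEMENT 13: Let 𝒫 be a 1-category, and identify m-simplices of N(Σ𝒫) with
functors σ : [k] × [l]ᵒᵖ → 𝒫, k + l = m - 1 (k is the type of σ).  Let
σ : [k] × [d-k]ᵒᵖ → 𝒫 be a non-degenerate suspect (d+1)-simplex of type k and
suspect index r ≤ k.  Then the face d_a σ is: a suspect simplex if
0 ≤ a ≤ r-2; of suspect index at most r-1 if a = r-1; of type k-1 and suspect
index r if a = r; a suspect simplex if r+1 ≤ a ≤ k; and of type k if
k+1 ≤ a ≤ d+1.

The suspect index is the minimal 0 ≤ r ≤ k such that rows r, …, k are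
constant (k+1 if none); a simplex is suspect if it is degenerate or has
suspect index r ≤ k with σ((r-1,0) < (r,0)) an identity.  Faces delete a row
or a column.  (We write the d of the statement as e + 1, so that the faces of
our (d+1)-simplex are still at least 1-dimensional and the notions apply.)
-/

open CategoryTheory

/-- An `m`-simplex of the simplicial set of `𝒫`-matrices: a pair `(k, l)` with
`k, l ≥ -1`, `k + l = m - 1` (encoded as `k1 = k+1`, `l1 = l+1` with
`k1 + l1 = m + 1`) together with a functor `[k] × [l]ᵒᵖ ⥤ 𝒫` (when `k1 = 0` or
`l1 = 0` the domain is empty, so there is a unique such functor). -/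
structure MatSimplex (P : Type) [SmallCategory P] (m : ℕ) : Type where
  k1 : ℕ
  l1 : ℕ
  hkl : k1 + l1 = m + 1
  mat : (Fin k1 × (Fin l1)ᵒᵖ) ⥤ P

variable {P : Type} [SmallCategory P]

/-- The face maps of the simplicial set of matrices: `dFace s a` removes the
`a`-th row of the matrix if `a ≤ k` (i.e. `a < k1`), and the `(a - k - 1)`-st
column otherwise. -/
def dFace {m : ℕ} (s : MatSimplex P (m + 1)) (a : Fin (m + 2)) : MatSimplex P m :=
  if h : a.val < s.k1 then
    match s, h with
    | ⟨0, _, _, _⟩, h => absurd h (Nat.not_lt_zero _)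
    | ⟨k + 1, l1, hkl, mat⟩, h =>
      ⟨k, l1, by omega,
        ((Fin.strictMono_succAbove (⟨a.val, h⟩ : Fin (k + 1))).monotone.functor.prod
          (Functor.id _)) ⋙ mat⟩
  else
    match s, h with
    | ⟨k1, 0, hkl, _⟩, h => absurd (show a.val < k1 by have := a.isLt; omega) h
    | ⟨k1, l + 1, hkl, mat⟩, h =>
      ⟨k1, l, by omega,
        ((Functor.id _).prod
          ((Fin.strictMono_succAbove (⟨a.val - k1, by have := a.isLt; omega⟩ :
              Fin (l + 1))).monotone.functor.op)) ⋙ mat⟩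

/-- The degeneracy maps of the simplicial set of matrices: `sDeg t a` doubles
the `a`-th row (inserting identities) if `a ≤ k`, and the `(a - k - 1)`-st
column otherwise. -/
def sDeg {m : ℕ} (t : MatSimplex P m) (a : Fin (m + 1)) : MatSimplex P (m + 1) :=
  if h : a.val < t.k1 then
    ⟨t.k1 + 1, t.l1, by have := t.hkl; omega,
      ((Fin.predAbove_right_monotone (⟨a.val, h⟩ : Fin t.k1)).functor.prod
        (Functor.id _)) ⋙ t.mat⟩
  else
    ⟨t.k1, t.l1 + 1, by have := t.hkl; omega,
      ((Functor.id _).prod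
        ((Fin.predAbove_right_monotone (⟨a.val - t.k1, by have := a.isLt; have := t.hkl; omega⟩ :
            Fin t.l1)).functor.op)) ⋙ t.mat⟩

open CategoryTheory

variable {P : Type} [SmallCategory P]

/-- The `i`-th row of a matrix simplex is constant. -/
def RowConst {m : ℕ} (s : MatSimplex P m) (i : Fin s.k1) : Prop :=
  ∀ (c c' : Fin s.l1) (h : c ≤ c'),
    ∃ he : s.mat.obj (i, Opposite.op c') = s.mat.obj (i, Opposite.op c),
      s.mat.map ((𝟙 i, (homOfLE h).op) : (i, Opposite.op c') ⟶ (i, Opposite.op c)) =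
        eqToHom he

/-- The suspect index of a matrix simplex of type `k` (`k1 = k + 1`): the
minimal `r` such that all rows `r ≤ i ≤ k` are constant (this set of `r`'s
always contains `k + 1`, so the index is at most `k + 1`). -/
noncomputable def suspectIndex {m : ℕ} (s : MatSimplex P m) : ℕ :=
  sInf {r | ∀ i : Fin s.k1, r ≤ i.val → RowConst s i}

/-- A matrix simplex is degenerate if it is the image of a degeneracy
operator. -/
def IsDegen {m : ℕ} (s : MatSimplex P (m + 1)) : Prop :=
  ∃ (t : MatSimplex P m) (i : Fin (m + 1)), s = sDeg t i

/-- A matrix simplex is suspect if it is degenerate, or has suspect index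
`r ≤ k` and the entry `σ((r-1, 0) < (r, 0))` is an identity. -/
def IsSuspect {m : ℕ} (s : MatSimplex P (m + 1)) : Prop :=
  IsDegen s ∨
  (∃ (hr1 : 1 ≤ suspectIndex s) (hrk : suspectIndex s + 1 ≤ s.k1) (h0 : 0 < s.l1),
    ∃ he : s.mat.obj (⟨suspectIndex s - 1, by omega⟩, Opposite.op (⟨0, h0⟩ : Fin s.l1)) =
           s.mat.obj (⟨suspectIndex s, by omega⟩, Opposite.op (⟨0, h0⟩ : Fin s.l1)),
      s.mat.map ((homOfLE (Fin.mk_le_mk.mpr (by omega)), 𝟙 (Opposite.op (⟨0, h0⟩ : Fin s.l1))) :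
          ((⟨suspectIndex s - 1, by omega⟩ : Fin s.k1), Opposite.op (⟨0, h0⟩ : Fin s.l1)) ⟶
          ((⟨suspectIndex s, by omega⟩ : Fin s.k1), Opposite.op (⟨0, h0⟩ : Fin s.l1))) =
        eqToHom he)


section Stmt13Aux
variable {P : Type} [SmallCategory P]

lemma thinP {n L : ℕ} (x y : Fin n × (Fin L)ᵒᵖ) : Subsingleton (x ⟶ y) := by
  constructor; intro f g; ext
  · apply ULift.ext; apply Subsingleton.elim
  · apply Quiver.Hom.unop_inj; apply ULift.ext; apply Subsingleton.elim

lemma map_transfer {n L : ℕ} (mat : Fin n × (Fin L)ᵒᵖ ⥤ P) {x y x' y' : Fin n × (Fin L)ᵒᵖ}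
    (hx : x = x') (hy : y = y') (f : x ⟶ y) (f' : x' ⟶ y') :
    (∃ he : mat.obj x = mat.obj y, mat.map f = eqToHom he) ↔
    (∃ he : mat.obj x' = mat.obj y', mat.map f' = eqToHom he) := by
  subst hx; subst hy
  rw [@Subsingleton.elim _ (thinP x y) f f']

lemma succAbove_val {n : ℕ} (b : Fin (n + 1)) (i : Fin n) :
    (b.succAbove i).val = if i.val < b.val then i.val else i.val + 1 := by
  rcases Nat.lt_or_ge i.val b.val with h | h
  · rw [Fin.succAbove_of_castSucc_lt b i (by simpa [Fin.lt_def] using h)]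
    simp [h]
  · rw [Fin.succAbove_of_le_castSucc b i (by simpa [Fin.le_def] using h)]
    simp [Nat.not_lt.mpr h]

/-- The set whose infimum is the suspect index. -/
def SuspSet {m : ℕ} (s : MatSimplex P m) : Set ℕ :=
  {r | ∀ i : Fin s.k1, r ≤ i.val → RowConst s i}

lemma k1_mem_suspSet {m : ℕ} (s : MatSimplex P m) : s.k1 ∈ SuspSet s :=
  fun i hi => absurd i.isLt (by omega)

lemma suspectIndex_le {m : ℕ} {s : MatSimplex P m} {r : ℕ} (h : r ∈ SuspSet s) :
    suspectIndex s ≤ r := Nat.sInf_le h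

lemma suspectIndex_mem {m : ℕ} (s : MatSimplex P m) : suspectIndex s ∈ SuspSet s :=
  Nat.sInf_mem ⟨s.k1, k1_mem_suspSet s⟩

lemma suspectIndex_eq {m : ℕ} {s : MatSimplex P m} {r : ℕ} (h1 : r ∈ SuspSet s)
    (h2 : (r - 1) ∉ SuspSet s) : suspectIndex s = r := by
  have h3 := suspectIndex_le h1
  by_contra hne
  have h4 : suspectIndex s ≤ r - 1 := by omega
  exact h2 (fun i hi => suspectIndex_mem s i (le_trans h4 hi))

lemma notRow {m : ℕ} {s : MatSimplex P m} {r : ℕ} (hidx : suspectIndex s = r)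
    (hr1 : 1 ≤ r) (hrk : r ≤ s.k1) : ¬ RowConst s ⟨r - 1, by omega⟩ := by
  intro hc
  have hmem : suspectIndex s ∈ SuspSet s := suspectIndex_mem s
  rw [hidx] at hmem
  have hm2 : r - 1 ∈ SuspSet s := by
    intro i hi
    rcases Nat.lt_or_ge i.val r with h | h
    · have hieq : i = (⟨r - 1, by omega⟩ : Fin s.k1) := Fin.ext (show i.val = r - 1 by omega)
      rw [hieq]; exact hc
    · exact hmem i h
  have := suspectIndex_le hm2; omega

lemma isSuspect_of {m : ℕ} (s : MatSimplex P (m + 1)) (r : ℕ) (hidx : suspectIndex s = r)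
    (hr1 : 1 ≤ r) (hrk : r + 1 ≤ s.k1) (h0 : 0 < s.l1)
    (hm : ∃ he : s.mat.obj (⟨r - 1, by omega⟩, Opposite.op (⟨0, h0⟩ : Fin s.l1)) =
           s.mat.obj (⟨r, by omega⟩, Opposite.op (⟨0, h0⟩ : Fin s.l1)),
      s.mat.map ((homOfLE (Fin.mk_le_mk.mpr (by omega)), 𝟙 (Opposite.op (⟨0, h0⟩ : Fin s.l1))) :
          ((⟨r - 1, by omega⟩ : Fin s.k1), Opposite.op (⟨0, h0⟩ : Fin s.l1)) ⟶
          ((⟨r, by omega⟩ : Fin s.k1), Opposite.op (⟨0, h0⟩ : Fin s.l1))) = eqToHom he) :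
    IsSuspect s := by
  subst hidx
  obtain ⟨he, hmm⟩ := hm
  exact Or.inr ⟨hr1, hrk, h0, he, hmm⟩

lemma isSuspect_extract {m : ℕ} {s : MatSimplex P (m + 1)} (hs : IsSuspect s)
    (hnd : ¬ IsDegen s) {r : ℕ} (hidx : suspectIndex s = r) :
    ∃ (hr1 : 1 ≤ r) (hrk : r + 1 ≤ s.k1) (h0 : 0 < s.l1),
    ∃ he : s.mat.obj (⟨r - 1, by omega⟩, Opposite.op (⟨0, h0⟩ : Fin s.l1)) =
           s.mat.obj (⟨r, by omega⟩, Opposite.op (⟨0, h0⟩ : Fin s.l1)),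
      s.mat.map ((homOfLE (Fin.mk_le_mk.mpr (by omega)), 𝟙 (Opposite.op (⟨0, h0⟩ : Fin s.l1))) :
          ((⟨r - 1, by omega⟩ : Fin s.k1), Opposite.op (⟨0, h0⟩ : Fin s.l1)) ⟶
          ((⟨r, by omega⟩ : Fin s.k1), Opposite.op (⟨0, h0⟩ : Fin s.l1))) = eqToHom he := by
  subst hidx
  exact hs.resolve_left hnd

lemma rowConst_face {k L m m' : ℕ} (hkl : k + L = m + 1) (hkl' : (k + 1) + L = m' + 1)
    (mat : Fin (k + 1) × (Fin L)ᵒᵖ ⥤ P) (b : Fin (k + 1)) (i : Fin k) :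
    RowConst (⟨k, L, hkl,
      ((Fin.strictMono_succAbove b).monotone.functor.prod (Functor.id _)) ⋙ mat⟩ :
        MatSimplex P m) i ↔
    RowConst (⟨k + 1, L, hkl', mat⟩ : MatSimplex P m') (b.succAbove i) := by
  constructor
  · intro H c c' h
    exact (map_transfer mat rfl rfl _ _).mp (H c c' h)
  · intro H c c' h
    exact (map_transfer mat rfl rfl _ _).mp (H c c' h)


lemma succAbove_mk_of_lt {n bv iv : ℕ} (hb : bv < n + 1) (hi : iv < n) (h : iv < bv) :
    (⟨bv, hb⟩ : Fin (n + 1)).succAbove ⟨iv, hi⟩ = ⟨iv, by omega⟩ := by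
  rw [Fin.succAbove_of_castSucc_lt _ _ (by rw [Fin.lt_def, Fin.coe_castSucc]; exact h)]
  rfl

lemma succAbove_mk_of_ge {n bv iv : ℕ} (hb : bv < n + 1) (hi : iv < n) (h : bv ≤ iv) :
    (⟨bv, hb⟩ : Fin (n + 1)).succAbove ⟨iv, hi⟩ = ⟨iv + 1, by omega⟩ := by
  rw [Fin.succAbove_of_le_castSucc _ _ (by rw [Fin.le_def, Fin.coe_castSucc]; exact h)]
  rfl

/-- The matrix of the face deleting row `b`. -/
def faceMat {k l : ℕ} (mat : Fin (k + 1) × (Fin (l + 1))ᵒᵖ ⥤ P) (b : Fin (k + 1)) :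
    Fin k × (Fin (l + 1))ᵒᵖ ⥤ P :=
  ((Fin.strictMono_succAbove b).monotone.functor.prod (Functor.id _)) ⋙ mat

lemma pair_eq {n L : ℕ} {x x' : Fin n} {y y' : (Fin L)ᵒᵖ} (hx : x = x') (hy : y = y') :
    ((x, y) : Fin n × (Fin L)ᵒᵖ) = (x', y') := by rw [hx, hy]

lemma rowConst_faceMat {k l m m' : ℕ} (hkl : k + (l + 1) = m + 1)
    (hkl' : (k + 1) + (l + 1) = m' + 1)
    (mat : Fin (k + 1) × (Fin (l + 1))ᵒᵖ ⥤ P) (b : Fin (k + 1)) (i : Fin k) :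
    RowConst (⟨k, l + 1, hkl, faceMat mat b⟩ : MatSimplex P m) i ↔
    RowConst (⟨k + 1, l + 1, hkl', mat⟩ : MatSimplex P m') (b.succAbove i) := by
  constructor
  · intro H c c' h
    exact (map_transfer mat rfl rfl _ _).mp (H c c' h)
  · intro H c c' h
    exact (map_transfer mat rfl rfl _ _).mp (H c c' h)

lemma face_index {e k l : ℕ} (hkl : (k + 1) + (l + 1) = (e + 2) + 1)
    (hkl' : k + (l + 1) = (e + 1) + 1)
    (mat : Fin (k + 1) × (Fin (l + 1))ᵒᵖ ⥤ P) (b : Fin (k + 1)) (r' : ℕ) (hr'1 : 1 ≤ r')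
    (hr'k : r' ≤ k)
    (hconst : ∀ i : Fin k, r' ≤ i.val →
      RowConst (⟨k + 1, l + 1, hkl, mat⟩ : MatSimplex P (e + 2)) (b.succAbove i))
    (hn : ¬ RowConst (⟨k + 1, l + 1, hkl, mat⟩ : MatSimplex P (e + 2))
      (b.succAbove ⟨r' - 1, by omega⟩)) :
    suspectIndex (⟨k, l + 1, hkl', faceMat mat b⟩ : MatSimplex P (e + 1)) = r' := by
  apply suspectIndex_eq
  · intro i hi
    rw [rowConst_faceMat hkl' hkl mat b i]
    exact hconst i hi
  · intro hmem
    have h1 := hmem (⟨r' - 1, show r' - 1 < k by omega⟩ : Fin k) (Nat.le_refl _)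
    rw [rowConst_faceMat hkl' hkl mat b _] at h1
    exact hn h1

lemma face_isSuspect {e k l : ℕ} (hkl' : k + (l + 1) = (e + 1) + 1)
    (mat : Fin (k + 1) × (Fin (l + 1))ᵒᵖ ⥤ P) (b : Fin (k + 1)) (r' : ℕ)
    (hr'1 : 1 ≤ r') (hr'k : r' + 1 ≤ k)
    (hidxF : suspectIndex (⟨k, l + 1, hkl', faceMat mat b⟩ : MatSimplex P (e + 1)) = r')
    (x y : Fin (k + 1))
    (hx : b.succAbove ⟨r' - 1, by omega⟩ = x) (hy : b.succAbove ⟨r', by omega⟩ = y)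
    (f : ((x, Opposite.op (⟨0, Nat.succ_pos l⟩ : Fin (l + 1))) :
        Fin (k + 1) × (Fin (l + 1))ᵒᵖ) ⟶ (y, Opposite.op ⟨0, Nat.succ_pos l⟩))
    (hm : ∃ he : mat.obj (x, Opposite.op ⟨0, Nat.succ_pos l⟩) =
        mat.obj (y, Opposite.op ⟨0, Nat.succ_pos l⟩), mat.map f = eqToHom he) :
    IsSuspect (⟨k, l + 1, hkl', faceMat mat b⟩ : MatSimplex P (e + 1)) := by
  apply isSuspect_of _ r' hidxF hr'1 hr'k (Nat.succ_pos l)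
  exact (map_transfer mat (pair_eq hx.symm rfl) (pair_eq hy.symm rfl) f _).mp hm

end Stmt13Aux

theorem stmt13 (P : Type) [SmallCategory P] (e : ℕ) (s : MatSimplex P (e + 2))
    (k r : ℕ) (hk : s.k1 = k + 1)
    (hnd : ¬ IsDegen s) (hsus : IsSuspect s)
    (hr : suspectIndex s = r) (hrk : r ≤ k) (a : Fin (e + 3)) :
    -- faces of indices `0 ≤ a ≤ r - 2` are suspect simplices:
    (a.val + 2 ≤ r → IsSuspect (dFace s a)) ∧
    -- the face of index `a = r - 1` has suspect index at most `r - 1`: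
    (a.val + 1 = r → suspectIndex (dFace s a) ≤ r - 1) ∧
    -- the face of index `a = r` has type `k - 1` and suspect index `r`:
    (a.val = r → (dFace s a).k1 = k ∧ suspectIndex (dFace s a) = r) ∧
    -- faces of indices `r + 1 ≤ a ≤ k` are suspect simplices:
    (r + 1 ≤ a.val → a.val ≤ k → IsSuspect (dFace s a)) ∧
    -- faces of indices `k + 1 ≤ a ≤ d + 1` have type `k`:
    (k + 1 ≤ a.val → (dFace s a).k1 = k + 1) := by
  obtain ⟨hr1, hrk2, h0, hmS⟩ := isSuspect_extract hsus hnd hr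
  obtain ⟨k1, l1, hkl, mat⟩ := s
  dsimp only at hk hrk2 h0 hmS hr ⊢
  subst hk
  obtain ⟨l, rfl⟩ : ∃ l, l1 = l + 1 := ⟨l1 - 1, by omega⟩
  have hmemS : ∀ i : Fin (k + 1), r ≤ i.val →
      RowConst (⟨k + 1, l + 1, hkl, mat⟩ : MatSimplex P (e + 2)) i := by
    have h := suspectIndex_mem (⟨k + 1, l + 1, hkl, mat⟩ : MatSimplex P (e + 2))
    rw [hr] at h
    exact h
  have hnotS : ¬ RowConst (⟨k + 1, l + 1, hkl, mat⟩ : MatSimplex P (e + 2))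
      ⟨r - 1, show r - 1 < k + 1 by omega⟩ := notRow hr hr1 (show r ≤ k + 1 by omega)
  have hface : ∀ h : a.val < k + 1,
      dFace (⟨k + 1, l + 1, hkl, mat⟩ : MatSimplex P (e + 2)) a =
        ⟨k, l + 1, by omega, faceMat mat ⟨a.val, h⟩⟩ := by
    intro h
    simp only [dFace, dif_pos h]
    rfl
  refine ⟨?_, ?_, ?_, ?_, ?_⟩
  · -- case a + 2 ≤ r : face is suspect
    intro ha
    have h : a.val < k + 1 := by omega
    rw [hface h]
    have hidxF : suspectIndex
        (⟨k, l + 1, by omega, faceMat mat ⟨a.val, h⟩⟩ : MatSimplex P (e + 1)) = r - 1 := by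
      apply face_index hkl _ mat _ (r - 1) (by omega) (by omega)
      · intro i hi
        obtain ⟨iv, hiv⟩ := i
        have hi' : r - 1 ≤ iv := hi
        rw [succAbove_mk_of_ge h hiv (by omega)]
        exact hmemS _ (show r ≤ iv + 1 by omega)
      · rw [succAbove_mk_of_ge h (show r - 1 - 1 < k by omega) (by omega)]
        intro hc
        exact hnotS (by
          have he : (⟨r - 1 - 1 + 1, show r - 1 - 1 + 1 < k + 1 by omega⟩ : Fin (k + 1)) =
              ⟨r - 1, show r - 1 < k + 1 by omega⟩ :=
            Fin.ext (show r - 1 - 1 + 1 = r - 1 by omega)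
          rwa [he] at hc)
    refine face_isSuspect _ mat _ (r - 1) (by omega) (show r - 1 + 1 ≤ k by omega) hidxF
      ⟨r - 1, show r - 1 < k + 1 by omega⟩ ⟨r, show r < k + 1 by omega⟩ ?_ ?_ _ hmS
    · exact (succAbove_mk_of_ge h (by omega) (by omega)).trans
        (Fin.ext (show r - 1 - 1 + 1 = r - 1 by omega))
    · exact (succAbove_mk_of_ge h (by omega) (by omega)).trans
        (Fin.ext (show r - 1 + 1 = r by omega))
  · -- case a + 1 = r : suspect index of face ≤ r - 1
    intro ha
    have h : a.val < k + 1 := by omega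
    rw [hface h]
    apply suspectIndex_le
    intro i hi
    obtain ⟨iv, hiv⟩ := i
    have hi' : r - 1 ≤ iv := hi
    rw [rowConst_faceMat (by omega) hkl mat _ _]
    rw [succAbove_mk_of_ge h hiv (by omega)]
    exact hmemS _ (show r ≤ iv + 1 by omega)
  · -- case a = r : face has type k - 1 and suspect index r
    intro ha
    have h : a.val < k + 1 := by omega
    rw [hface h]
    refine ⟨rfl, ?_⟩
    apply face_index hkl _ mat _ r hr1 (by omega)
    · intro i hi
      obtain ⟨iv, hiv⟩ := i
      have hi' : r ≤ iv := hi
      rw [succAbove_mk_of_ge h hiv (by omega)]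
      exact hmemS _ (show r ≤ iv + 1 by omega)
    · rw [succAbove_mk_of_lt h (show r - 1 < k by omega) (by omega)]
      exact hnotS
  · -- case r + 1 ≤ a ≤ k : face is suspect
    intro ha1 ha2
    have h : a.val < k + 1 := by omega
    rw [hface h]
    have hidxF : suspectIndex
        (⟨k, l + 1, by omega, faceMat mat ⟨a.val, h⟩⟩ : MatSimplex P (e + 1)) = r := by
      apply face_index hkl _ mat _ r hr1 (by omega)
      · intro i hi
        obtain ⟨iv, hiv⟩ := i
        have hi' : r ≤ iv := hi
        rcases Nat.lt_or_ge iv a.val with hlt | hge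
        · rw [succAbove_mk_of_lt h hiv hlt]
          exact hmemS _ (show r ≤ iv by omega)
        · rw [succAbove_mk_of_ge h hiv hge]
          exact hmemS _ (show r ≤ iv + 1 by omega)
      · rw [succAbove_mk_of_lt h (show r - 1 < k by omega) (by omega)]
        exact hnotS
    refine face_isSuspect _ mat _ r hr1 (show r + 1 ≤ k by omega) hidxF
      ⟨r - 1, show r - 1 < k + 1 by omega⟩ ⟨r, show r < k + 1 by omega⟩ ?_ ?_ _ hmS
    · exact succAbove_mk_of_lt h (by omega) (by omega)
    · exact succAbove_mk_of_lt h (by omega) (by omega)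
  · -- case k + 1 ≤ a : face has type k
    intro ha
    have h : ¬ (a.val < k + 1) := by omega
    simp only [dFace, dif_neg h]
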